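/- Let N be the relaxed network constraint set of a K-layer ReLU network built from preactivation bounds valid on a compact polytope X, and let c be a fixed cost vector. Then there exists a finite constant L ∈ ℝ such that for all x₁, x₂ ∈ X, |sup{cᵀz : (x₁,z) ∈ N} − sup{cᵀz : (x₂,z) ∈ N}| ≤ L‖x₁ − x₂‖₂; that is, the LP relaxation value is an L-Lipschitz function of the input on X. -/

import Mathlib

open Finset Matrix

noncomputable section

/-- The forward map of a `K`-layer ReLU network. -/
def netFwd (n : ℕ → ℕ) (W : ∀ k : ℕ, Matrix (Fin (n (k + 1))) (Fin (n k)) ℝ) :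
    ∀ K : ℕ, (Fin (n 0) → ℝ) → Fin (n K) → ℝ
  | 0, x => x
  | K + 1, x => fun i => max ((W K).mulVec (netFwd n W K x) i) 0

/-- Membership of `(x, z)` in the relaxed network constraint set `N` of a `K`-layer
ReLU network built from preactivation bounds `l k, u k` at each layer. -/
def InNetRelax (n : ℕ → ℕ) (W : ∀ k : ℕ, Matrix (Fin (n (k + 1))) (Fin (n k)) ℝ)
    (l u : ∀ k : ℕ, Fin (n (k + 1)) → ℝ) (K : ℕ)
    (x : Fin (n 0) → ℝ) (z : Fin (n K) → ℝ) : Prop :=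
  ∃ xs : ∀ k : ℕ, Fin (n k) → ℝ,
    xs 0 = x ∧ xs K = z ∧
    ∀ k < K, ∀ i,
      0 ≤ xs (k + 1) i ∧ (W k).mulVec (xs k) i ≤ xs (k + 1) i ∧
      xs (k + 1) i ≤ u k i * ((W k).mulVec (xs k) i - l k i) / (u k i - l k i)

/-- The bounds `l, u` are valid on `S`. -/
def ValidBounds (n : ℕ → ℕ) (W : ∀ k : ℕ, Matrix (Fin (n (k + 1))) (Fin (n k)) ℝ)
    (l u : ∀ k : ℕ, Fin (n (k + 1)) → ℝ) (K : ℕ)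
    (S : Set (EuclideanSpace ℝ (Fin (n 0)))) : Prop :=
  ∀ x ∈ S, ∀ k < K, ∀ i,
    l k i ≤ (W k).mulVec (netFwd n W k x) i ∧ (W k).mulVec (netFwd n W k x) i ≤ u k i

open scoped InnerProductSpace


section Carath

variable {ι : Type*} [Fintype ι] [DecidableEq ι]

/-- Conic Carathéodory: a nonnegative combination can be rewritten with linearly
independent support. -/
lemma conic_caratheodory {H : Type*} [AddCommGroup H] [Module ℝ H]
    (a : ι → H) (s : Finset ι) :
    ∀ lam : ι → ℝ, (∀ j, 0 ≤ lam j) → (∀ j ∉ s, lam j = 0) →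
    ∃ t ⊆ s, ∃ mu : ι → ℝ, (∀ j, 0 ≤ mu j) ∧ (∀ j ∉ t, mu j = 0) ∧
      (∑ j, mu j • a j = ∑ j, lam j • a j) ∧
      LinearIndependent ℝ (fun j : t => a (j : ι)) := by
  induction s using Finset.strongInduction with
  | _ s ih =>
    intro lam hpos hsupp
    by_cases hind : LinearIndependent ℝ (fun j : s => a (j : ι))
    · exact ⟨s, Finset.Subset.refl _, lam, hpos, hsupp, rfl, hind⟩
    · obtain ⟨g, hgsum, i0, hgi0⟩ := Fintype.not_linearIndependent_iff.1 hind
      have key : ∀ G : ι → ℝ, (∀ j ∉ s, G j = 0) → (∑ j, G j • a j = 0) →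
          (∃ j ∈ s, 0 < G j) →
          ∃ t ⊆ s, ∃ mu : ι → ℝ, (∀ j, 0 ≤ mu j) ∧ (∀ j ∉ t, mu j = 0) ∧
            (∑ j, mu j • a j = ∑ j, lam j • a j) ∧
            LinearIndependent ℝ (fun j : t => a (j : ι)) := by
        rintro G hGsupp hGsum ⟨jp, hjps, hjpp⟩
        set T : Finset ι := s.filter (fun j => 0 < G j) with hT
        have hTne : T.Nonempty := ⟨jp, Finset.mem_filter.2 ⟨hjps, hjpp⟩⟩
        set τ : ℝ := T.inf' hTne (fun j => lam j / G j) with hτ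
        obtain ⟨j0, hj0T, hj0⟩ := Finset.exists_mem_eq_inf' hTne (fun j => lam j / G j)
        have hj0s : j0 ∈ s := (Finset.mem_filter.1 hj0T).1
        have hGj0 : 0 < G j0 := (Finset.mem_filter.1 hj0T).2
        have hτ0 : 0 ≤ τ := by
          apply Finset.le_inf'
          intro b hb
          exact div_nonneg (hpos b) (le_of_lt (Finset.mem_filter.1 hb).2)
        set lam' : ι → ℝ := fun j => lam j - τ * G j with hlam'
        have hτle : ∀ j ∈ T, τ * G j ≤ lam j := by
          intro j hj
          have h1 : τ ≤ lam j / G j := Finset.inf'_le _ hj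
          have h2 : 0 < G j := (Finset.mem_filter.1 hj).2
          calc τ * G j ≤ (lam j / G j) * G j :=
                mul_le_mul_of_nonneg_right h1 (le_of_lt h2)
            _ = lam j := div_mul_cancel₀ _ (ne_of_gt h2)
        have hpos' : ∀ j, 0 ≤ lam' j := by
          intro j
          by_cases hjs : j ∈ s
          · by_cases hjG : 0 < G j
            · have := hτle j (Finset.mem_filter.2 ⟨hjs, hjG⟩)
              simp only [hlam']; linarith
            · push_neg at hjG
              have h1 : 0 ≤ τ * (-G j) := mul_nonneg hτ0 (by linarith)
              have h2 := hpos j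
              simp only [hlam']; nlinarith
          · simp only [hlam', hsupp j hjs, hGsupp j hjs, mul_zero, sub_zero, le_refl]
        have hj0z : lam' j0 = 0 := by
          have hτeq : τ = lam j0 / G j0 := hj0
          simp only [hlam', hτeq, div_mul_cancel₀ _ (ne_of_gt hGj0), sub_self]
        have hsupp' : ∀ j ∉ s.erase j0, lam' j = 0 := by
          intro j hj
          rw [Finset.mem_erase] at hj
          push_neg at hj
          by_cases hjs : j ∈ s
          · have hjj0 : j = j0 := by
              by_contra hne
              exact (hj hne) hjs
            rw [hjj0]; exact hj0z
          · simp only [hlam', hsupp j hjs, hGsupp j hjs, mul_zero, sub_zero]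
        have hsum' : ∑ j, lam' j • a j = ∑ j, lam j • a j := by
          simp only [hlam', sub_smul, Finset.sum_sub_distrib, mul_smul]
          rw [← Finset.smul_sum, hGsum, smul_zero, sub_zero]
        obtain ⟨t, hts, mu, h1, h2, h3, h4⟩ :=
          ih (s.erase j0) (Finset.erase_ssubset hj0s) lam' hpos' hsupp'
        exact ⟨t, hts.trans (Finset.erase_subset _ _), mu, h1, h2, by rw [h3, hsum'], h4⟩
      set G0 : ι → ℝ := fun j => if h : j ∈ s then g ⟨j, h⟩ else 0 with hG0
      have hG0supp : ∀ j ∉ s, G0 j = 0 := fun j hj => dif_neg hj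
      have hG0at : ∀ j : {x // x ∈ s}, G0 (j : ι) = g j := by
        intro j
        simp only [hG0, dif_pos j.2]
      have hG0sum : ∑ j, G0 j • a j = 0 := by
        rw [← Finset.sum_subset (Finset.subset_univ s)
          (fun x _ hx => by rw [hG0supp x hx, zero_smul])]
        rw [← Finset.sum_attach s (fun j => G0 j • a j)]
        calc ∑ j : {x // x ∈ s}, G0 (j : ι) • a (j : ι)
            = ∑ j : {x // x ∈ s}, g j • a (j : ι) := by
              exact Finset.sum_congr rfl fun j _ => by rw [hG0at]
          _ = 0 := hgsum
      have hex : ∃ j ∈ s, G0 j ≠ 0 := ⟨(i0 : ι), i0.2, by rw [hG0at i0]; exact hgi0⟩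
      by_cases hposcase : ∃ j ∈ s, 0 < G0 j
      · exact key G0 hG0supp hG0sum hposcase
      · push_neg at hposcase
        apply key (-G0)
        · intro j hj; simp [hG0supp j hj]
        · simp only [Pi.neg_apply, neg_smul, Finset.sum_neg_distrib, hG0sum, neg_zero]
        · obtain ⟨j, hjs, hjne⟩ := hex
          refine ⟨j, hjs, ?_⟩
          simp only [Pi.neg_apply, neg_pos]
          exact lt_of_le_of_ne (hposcase j hjs) hjne

end Carath

section Bounds

variable {ι : Type*} [Fintype ι] [DecidableEq ι]

lemma sum_restrict {M : Type*} [AddCommMonoid M] (t : Finset ι) (F : ι → M)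
    (h : ∀ j ∉ t, F j = 0) :
    ∑ j : {x // x ∈ t}, F (j : ι) = ∑ j, F j := by
  rw [Finset.univ_eq_attach, Finset.sum_attach t F]
  exact Finset.sum_subset (Finset.subset_univ t) (fun x _ hx => h x hx)

variable {H : Type*} [NormedAddCommGroup H] [NormedSpace ℝ H] [FiniteDimensional ℝ H]

lemma indep_bound (a : ι → H) (t : Finset ι)
    (ht : LinearIndependent ℝ (fun j : t => a (j : ι))) :
    ∃ c : ℝ, 0 ≤ c ∧ ∀ mu : ι → ℝ, (∀ j ∉ t, mu j = 0) →
      ∑ j, |mu j| ≤ c * ‖∑ j, mu j • a j‖ := by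
  classical
  set φ : ({x // x ∈ t} → ℝ) →ₗ[ℝ] H :=
    Fintype.linearCombination ℝ (fun j : {x // x ∈ t} => a (j : ι)) with hφ
  have hφapp : ∀ f, φ f = ∑ j : {x // x ∈ t}, f j • a (j : ι) := fun f => rfl
  have hinj : Function.Injective φ := by
    rw [← LinearMap.ker_eq_bot, LinearMap.ker_eq_bot']
    intro f hf
    have := Fintype.linearIndependent_iff.1 ht f (by rw [← hφapp]; exact hf)
    funext j; exact this j
  set e := LinearEquiv.ofInjective φ hinj with he
  set ψ := e.toContinuousLinearEquiv with hψ
  set c0 : ℝ := ‖(ψ.symm : LinearMap.range φ →L[ℝ] ({x // x ∈ t} → ℝ))‖ with hc0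
  refine ⟨t.card * c0, by positivity, ?_⟩
  intro mu hsupp
  set f : {x // x ∈ t} → ℝ := fun j => mu (j : ι) with hf
  have hφf : φ f = ∑ j, mu j • a j := by
    rw [hφapp]
    exact sum_restrict t (fun j => mu j • a j) (fun j hj => by simp [hsupp j hj])
  have h3 : ((ψ f : LinearMap.range φ) : H) = φ f := by
    simp [hψ, he]
  have hbound : ‖f‖ ≤ c0 * ‖φ f‖ := by
    have h1 : ψ.symm (ψ f) = f := ψ.symm_apply_apply f
    have h2 := (ψ.symm : LinearMap.range φ →L[ℝ] ({x // x ∈ t} → ℝ)).le_opNorm (ψ f)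
    simp only [ContinuousLinearEquiv.coe_coe] at h2
    rw [h1] at h2
    have h4 : ‖ψ f‖ = ‖φ f‖ := by rw [← h3]; rfl
    rw [h4] at h2
    exact h2
  calc ∑ j, |mu j| = ∑ j : {x // x ∈ t}, |mu (j : ι)| :=
        (sum_restrict t (fun j => |mu j|) (fun j hj => by simp [hsupp j hj])).symm
    _ ≤ ∑ _j : {x // x ∈ t}, ‖f‖ := by
        apply Finset.sum_le_sum
        intro j _
        simpa [hf, Real.norm_eq_abs] using norm_le_pi_norm f j
    _ = t.card * ‖f‖ := by
        rw [Finset.sum_const, nsmul_eq_mul, Finset.card_univ, Fintype.card_coe]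
    _ ≤ t.card * (c0 * ‖φ f‖) := by
        apply mul_le_mul_of_nonneg_left hbound (Nat.cast_nonneg _)
    _ = (t.card * c0) * ‖∑ j, mu j • a j‖ := by rw [hφf]; ring

lemma cone_coeff_bound (a : ι → H) :
    ∃ C : ℝ, 0 ≤ C ∧ ∀ (s : Finset ι) (lam : ι → ℝ), (∀ j, 0 ≤ lam j) → (∀ j ∉ s, lam j = 0) →
      ∃ mu : ι → ℝ, (∀ j, 0 ≤ mu j) ∧ (∀ j ∉ s, mu j = 0) ∧
        (∑ j, mu j • a j = ∑ j, lam j • a j) ∧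
        ∑ j, mu j ≤ C * ‖∑ j, lam j • a j‖ := by
  classical
  have hch : ∀ t : Finset ι, ∃ c : ℝ, 0 ≤ c ∧
      (LinearIndependent ℝ (fun j : t => a (j : ι)) → ∀ mu : ι → ℝ, (∀ j ∉ t, mu j = 0) →
        ∑ j, |mu j| ≤ c * ‖∑ j, mu j • a j‖) := by
    intro t
    by_cases h : LinearIndependent ℝ (fun j : t => a (j : ι))
    · obtain ⟨c, hc0, hc⟩ := indep_bound a t h
      exact ⟨c, hc0, fun _ => hc⟩
    · exact ⟨0, le_refl _, fun h' => absurd h' h⟩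
  choose cf hcf0 hcf using hch
  refine ⟨∑ t : Finset ι, cf t, Finset.sum_nonneg fun t _ => hcf0 t, ?_⟩
  intro s lam hpos hsupp
  obtain ⟨t, hts, mu, h1, h2, h3, h4⟩ := conic_caratheodory a s lam hpos hsupp
  refine ⟨mu, h1, fun j hj => h2 j (fun hjt => hj (hts hjt)), h3, ?_⟩
  have hb := hcf t h4 mu h2
  calc ∑ j, mu j = ∑ j, |mu j| :=
        Finset.sum_congr rfl fun j _ => (abs_of_nonneg (h1 j)).symm
    _ ≤ cf t * ‖∑ j, mu j • a j‖ := hb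
    _ ≤ (∑ t' : Finset ι, cf t') * ‖∑ j, mu j • a j‖ := by
        apply mul_le_mul_of_nonneg_right _ (norm_nonneg _)
        exact Finset.single_le_sum (fun t' _ => hcf0 t') (Finset.mem_univ t)
    _ = (∑ t' : Finset ι, cf t') * ‖∑ j, lam j • a j‖ := by rw [h3]

end Bounds

section Hoffman

variable {ι : Type*} [Fintype ι] [DecidableEq ι]
variable {H : Type*} [NormedAddCommGroup H] [InnerProductSpace ℝ H] [FiniteDimensional ℝ H]

lemma farkas_cone (a : ι → H) (I : Finset ι) (v : H)
    (hv : ∀ d : H, (∀ j ∈ I, ⟪a j, d⟫_ℝ ≤ 0) → ⟪v, d⟫_ℝ ≤ 0) :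
    ∃ lam : ι → ℝ, (∀ j, 0 ≤ lam j) ∧ (∀ j ∉ I, lam j = 0) ∧ v = ∑ j, lam j • a j := by
  classical
  set Cset : Set H := {w | ∃ lam : ι → ℝ,
    (∀ j, 0 ≤ lam j) ∧ (∀ j ∉ I, lam j = 0) ∧ w = ∑ j, lam j • a j} with hCset
  set K : ConvexCone ℝ H :=
    { carrier := Cset
      smul_mem' := by
        rintro c hc w ⟨lam, h1, h2, rfl⟩
        exact ⟨fun j => c * lam j, fun j => mul_nonneg hc.le (h1 j),
          fun j hj => by simp [h2 j hj],
          by rw [Finset.smul_sum]; exact Finset.sum_congr rfl fun j _ => (mul_smul _ _ _).symm⟩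
      add_mem' := by
        rintro w ⟨lam, h1, h2, rfl⟩ w' ⟨lam', h1', h2', rfl⟩
        exact ⟨fun j => lam j + lam' j, fun j => add_nonneg (h1 j) (h1' j),
          fun j hj => by simp [h2 j hj, h2' j hj],
          by rw [← Finset.sum_add_distrib]
             exact Finset.sum_congr rfl fun j _ => (add_smul _ _ _).symm⟩ } with hK
  have hclosed : IsClosed (K : Set H) := by
    have heq : Cset = ⋃ t ∈ {t : Finset ι | t ⊆ I ∧ LinearIndependent ℝ (fun j : t => a (j : ι))},
        (Fintype.linearCombination ℝ (fun j : {x // x ∈ t} => a (j : ι))) ''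
          {f | ∀ j, 0 ≤ f j} := by
      ext w
      constructor
      · rintro ⟨lam, h1, h2, rfl⟩
        obtain ⟨t, htI, mu, hm1, hm2, hm3, hm4⟩ := conic_caratheodory a I lam h1 h2
        refine Set.mem_biUnion (show t ∈ _ from ⟨htI, hm4⟩) ?_
        refine ⟨fun j => mu (j : ι), fun j => hm1 _, ?_⟩
        show ∑ j : {x // x ∈ t}, mu (j : ι) • a (j : ι) = _
        rw [sum_restrict t (fun j => mu j • a j) (fun j hj => by simp [hm2 j hj]), hm3]
      · intro hw
        simp only [Set.mem_iUnion] at hw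
        obtain ⟨t, ⟨htI, hind⟩, f, hf0, rfl⟩ := hw
        refine ⟨fun j => if h : j ∈ t then f ⟨j, h⟩ else 0, ?_, ?_, ?_⟩
        · intro j; by_cases h : j ∈ t
          · simp only [dif_pos h]; exact hf0 _
          · simp [dif_neg h]
        · intro j hj; exact dif_neg (fun h => hj (htI h))
        · rw [← sum_restrict t (fun j => (if h : j ∈ t then f ⟨j, h⟩ else 0) • a j)
            (fun j hj => by simp [dif_neg hj])]
          show _ = ∑ j : {x // x ∈ t}, (if h : (j : ι) ∈ t then f ⟨(j : ι), h⟩ else 0) • a (j : ι)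
          exact (Finset.sum_congr rfl fun j _ => by rw [dif_pos j.2]).symm
    show IsClosed Cset
    rw [heq]
    apply Set.Finite.isClosed_biUnion (Set.toFinite _)
    rintro t ⟨htI, hind⟩
    have hker : LinearMap.ker
        (Fintype.linearCombination ℝ (fun j : {x // x ∈ t} => a (j : ι))) = ⊥ := by
      rw [LinearMap.ker_eq_bot']
      intro f hf
      have := Fintype.linearIndependent_iff.1 hind f hf
      funext j; exact this j
    have hemb := LinearMap.isClosedEmbedding_of_injective hker
    have hcl : IsClosed {f : {x // x ∈ t} → ℝ | ∀ j, 0 ≤ f j} := by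
      have : {f : {x // x ∈ t} → ℝ | ∀ j, 0 ≤ f j} = ⋂ j, {f | 0 ≤ f j} := by
        ext; simp [Set.mem_iInter]
      rw [this]
      exact isClosed_iInter fun j => isClosed_le continuous_const (continuous_apply j)
    exact hemb.isClosedMap _ hcl
  have hne : (K : Set H).Nonempty :=
    ⟨0, ⟨fun _ => 0, fun j => le_refl 0, fun j _ => rfl, by simp⟩⟩
  by_contra hvn
  have hvK : v ∉ (K : Set H) := fun h => hvn h
  obtain ⟨f, u, hfu, hufv⟩ := geometric_hahn_banach_closed_point K.convex hclosed hvK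
  have h0K : (0 : H) ∈ (K : Set H) := ⟨fun _ => 0, fun j => le_refl 0, fun j _ => rfl, by simp⟩
  have hu : 0 < u := by have := hfu 0 h0K; simpa using this
  have hfK : ∀ w ∈ (K : Set H), f w ≤ 0 := by
    intro w hw
    by_contra hpos
    push_neg at hpos
    have hc : 0 < u / f w + 1 := by have := div_pos hu hpos; linarith
    have hmem : (u / f w + 1) • w ∈ (K : Set H) := (K.smul_mem_iff hc).2 hw
    have h1 := hfu _ hmem
    rw [map_smul, smul_eq_mul] at h1
    have e : (u / f w + 1) * f w = u + f w := by field_simp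
    linarith
  set d := (InnerProductSpace.toDual ℝ H).symm f with hdd
  have hd : ∀ y, ⟪d, y⟫_ℝ = f y := fun y => InnerProductSpace.toDual_symm_apply
  have haK : ∀ j ∈ I, (a j) ∈ (K : Set H) := by
    intro j hj
    refine ⟨fun j' => if j' = j then 1 else 0, ?_, ?_, ?_⟩
    · intro j'; dsimp only; split <;> norm_num
    · intro j' hj'; dsimp only; rw [if_neg]; intro h; rw [h] at hj'; exact hj' hj
    · simp [ite_smul]
  have hfin := hv d (fun j hj => by rw [real_inner_comm, hd]; exact hfK _ (haK j hj))
  rw [real_inner_comm, hd] at hfin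
  linarith

lemma hoffman (a : ι → H) :
    ∃ C : ℝ, 0 ≤ C ∧ ∀ (b : ι → ℝ) (x : H),
      (∃ w, ∀ j, ⟪a j, w⟫_ℝ ≤ b j) →
      ∃ p, (∀ j, ⟪a j, p⟫_ℝ ≤ b j) ∧
        ‖x - p‖ ≤ C * ∑ j, max (⟪a j, x⟫_ℝ - b j) 0 := by
  classical
  obtain ⟨C, hC0, hC⟩ := cone_coeff_bound a
  refine ⟨C, hC0, ?_⟩
  rintro b x ⟨w, hw⟩
  set P : Set H := {ζ | ∀ j, ⟪a j, ζ⟫_ℝ ≤ b j} with hP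
  have hPc : Convex ℝ P := by
    have : P = ⋂ j, {ζ | ⟪a j, ζ⟫_ℝ ≤ b j} := by ext; simp [hP, Set.mem_iInter]
    rw [this]
    refine convex_iInter fun j => convex_halfSpace_le ?_ (b j)
    exact ⟨fun y z => inner_add_right _ _ _, fun c y => by
      rw [real_inner_smul_right]; rfl⟩
  have hPcl : IsClosed P := by
    have : P = ⋂ j, {ζ | ⟪a j, ζ⟫_ℝ ≤ b j} := by ext; simp [hP, Set.mem_iInter]
    rw [this]
    exact isClosed_iInter fun j =>
      isClosed_le (continuous_const.inner continuous_id) continuous_const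
  have hPne : P.Nonempty := ⟨w, by simp only [hP, Set.mem_setOf_eq]; exact hw⟩
  obtain ⟨p, hpP, hproj⟩ :=
    exists_norm_eq_iInf_of_complete_convex hPne hPcl.isComplete hPc x
  have hvar := (norm_eq_iInf_iff_real_inner_le_zero hPc hpP).1 hproj
  set I : Finset ι := Finset.univ.filter (fun j => ⟪a j, p⟫_ℝ = b j) with hI
  have hQ : ∀ d : H, (∀ j ∈ I, ⟪a j, d⟫_ℝ ≤ 0) → ⟪x - p, d⟫_ℝ ≤ 0 := by
    intro d hd
    have hev : ∀ j, ∀ᶠ t : ℝ in nhdsWithin 0 (Set.Ioi 0), ⟪a j, p + t • d⟫_ℝ ≤ b j := by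
      intro j
      by_cases hj : j ∈ I
      · filter_upwards [self_mem_nhdsWithin] with t ht
        have hact : ⟪a j, p⟫_ℝ = b j := (Finset.mem_filter.1 hj).2
        have hexp : ⟪a j, p + t • d⟫_ℝ = ⟪a j, p⟫_ℝ + t * ⟪a j, d⟫_ℝ := by
          rw [inner_add_right, real_inner_smul_right]
        have htd : t * ⟪a j, d⟫_ℝ ≤ 0 :=
          mul_nonpos_of_nonneg_of_nonpos (le_of_lt ht) (hd j hj)
        rw [hexp, hact]; linarith
      · have hslack : ⟪a j, p⟫_ℝ < b j :=
          lt_of_le_of_ne (hpP j) (by simpa [hI] using hj)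
        have hcont : Continuous fun t : ℝ => ⟪a j, p + t • d⟫_ℝ :=
          continuous_const.inner (continuous_const.add (continuous_id.smul continuous_const))
        have h0 : (fun t : ℝ => ⟪a j, p + t • d⟫_ℝ) 0 = ⟪a j, p⟫_ℝ := by simp
        have := hcont.continuousAt (x := (0:ℝ))
        have hev' : ∀ᶠ t : ℝ in nhds 0, ⟪a j, p + t • d⟫_ℝ < b j := by
          have htend : Filter.Tendsto (fun t : ℝ => ⟪a j, p + t • d⟫_ℝ)
              (nhds 0) (nhds (⟪a j, p⟫_ℝ)) := by
            rw [← h0]; exact this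
          exact htend.eventually_lt_const hslack
        exact (hev'.filter_mono nhdsWithin_le_nhds).mono fun t ht => le_of_lt ht
    have hall : ∀ᶠ t : ℝ in nhdsWithin 0 (Set.Ioi 0),
        (∀ j, ⟪a j, p + t • d⟫_ℝ ≤ b j) ∧ t ∈ Set.Ioi 0 :=
      (Filter.eventually_all.2 hev).and self_mem_nhdsWithin
    obtain ⟨t, hmem, htpos⟩ := hall.exists
    have hvineq := hvar _ hmem
    have : ⟪x - p, p + t • d - p⟫_ℝ = t * ⟪x - p, d⟫_ℝ := by
      rw [add_sub_cancel_left, real_inner_smul_right]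
    rw [this] at hvineq
    by_contra hcon
    push_neg at hcon
    exact absurd (mul_pos htpos hcon) (not_lt.2 hvineq)
  obtain ⟨lam, hl1, hl2, hl3⟩ := farkas_cone a I (x - p) hQ
  obtain ⟨mu, hm1, hm2, hm3, hm4⟩ := hC I lam hl1 hl2
  rw [← hl3] at hm4
  set R : ℝ := ∑ j, max (⟪a j, x⟫_ℝ - b j) 0 with hR
  have hR0 : 0 ≤ R := Finset.sum_nonneg fun j _ => le_max_right _ _
  have hterm : ∀ j, mu j * ⟪a j, x - p⟫_ℝ ≤ mu j * R := by
    intro j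
    by_cases hj : j ∈ I
    · have hact : ⟪a j, p⟫_ℝ = b j := (Finset.mem_filter.1 hj).2
      have hioc : ⟪a j, x - p⟫_ℝ = ⟪a j, x⟫_ℝ - b j := by
        rw [inner_sub_right, hact]
      rw [hioc]
      have h5 : ⟪a j, x⟫_ℝ - b j ≤ R := by
        refine le_trans (le_max_left _ 0) ?_
        exact Finset.single_le_sum (f := fun j' => max (⟪a j', x⟫_ℝ - b j') 0)
          (fun j' _ => le_max_right _ _) (Finset.mem_univ j)
      exact mul_le_mul_of_nonneg_left h5 (hm1 j)
    · rw [hm2 j hj]; simp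
  have hsum : ∑ j, mu j • a j = x - p := by rw [hm3, ← hl3]
  have hsq : ‖x - p‖ * ‖x - p‖ = ∑ j, mu j * ⟪a j, x - p⟫_ℝ := by
    calc ‖x - p‖ * ‖x - p‖ = ⟪x - p, x - p⟫_ℝ := (real_inner_self_eq_norm_mul_norm _).symm
      _ = ⟪∑ j, mu j • a j, x - p⟫_ℝ := by rw [hsum]
      _ = ∑ j, mu j * ⟪a j, x - p⟫_ℝ := by
          rw [sum_inner]
          exact Finset.sum_congr rfl fun j _ => real_inner_smul_left _ _ _
  have hchain : ‖x - p‖ * ‖x - p‖ ≤ C * ‖x - p‖ * R := by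
    calc ‖x - p‖ * ‖x - p‖ = ∑ j, mu j * ⟪a j, x - p⟫_ℝ := hsq
      _ ≤ ∑ j, mu j * R := Finset.sum_le_sum fun j _ => hterm j
      _ = (∑ j, mu j) * R := by rw [← Finset.sum_mul]
      _ ≤ C * ‖x - p‖ * R := mul_le_mul_of_nonneg_right hm4 hR0
  refine ⟨p, hpP, ?_⟩
  by_cases hz : ‖x - p‖ = 0
  · rw [hz]; exact mul_nonneg hC0 hR0
  · have hpos : 0 < ‖x - p‖ := lt_of_le_of_ne (norm_nonneg _) (Ne.symm hz)
    nlinarith [hchain]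

end Hoffman

namespace LPAux

abbrev Idx (n : ℕ → ℕ) (K : ℕ) := Σ k : Fin (K + 1), Fin (n k)
abbrev Esp (n : ℕ → ℕ) (K : ℕ) := EuclideanSpace ℝ (Idx n K)
abbrev Cdx (n : ℕ → ℕ) (K : ℕ) :=
  ((Σ k : Fin K, Fin (n (k + 1))) × Fin 3) ⊕ (Fin (n 0) × Fin 2)

variable (n : ℕ → ℕ) (W : ∀ k : ℕ, Matrix (Fin (n (k + 1))) (Fin (n k)) ℝ)
  (l u : ∀ k : ℕ, Fin (n (k + 1)) → ℝ) (K : ℕ)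

noncomputable def rowv : Cdx n K → Esp n K
  | Sum.inl ⟨⟨k, i⟩, t⟩ =>
    ![ -(EuclideanSpace.single (⟨⟨(k : ℕ) + 1, Nat.succ_lt_succ k.isLt⟩, i⟩ : Idx n K) (1 : ℝ)),
       (∑ j, W k i j • EuclideanSpace.single
           (⟨⟨(k : ℕ), Nat.lt_succ_of_lt k.isLt⟩, j⟩ : Idx n K) (1 : ℝ))
         - EuclideanSpace.single (⟨⟨(k : ℕ) + 1, Nat.succ_lt_succ k.isLt⟩, i⟩ : Idx n K) (1 : ℝ),
       (u k i - l k i) • EuclideanSpace.single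
           (⟨⟨(k : ℕ) + 1, Nat.succ_lt_succ k.isLt⟩, i⟩ : Idx n K) (1 : ℝ)
         - u k i • ∑ j, W k i j • EuclideanSpace.single
           (⟨⟨(k : ℕ), Nat.lt_succ_of_lt k.isLt⟩, j⟩ : Idx n K) (1 : ℝ) ] t
  | Sum.inr ⟨i, t⟩ =>
    ![ EuclideanSpace.single (⟨⟨0, Nat.succ_pos K⟩, i⟩ : Idx n K) (1 : ℝ),
       -(EuclideanSpace.single (⟨⟨0, Nat.succ_pos K⟩, i⟩ : Idx n K) (1 : ℝ)) ] t

noncomputable def rhsv (x : Fin (n 0) → ℝ) : Cdx n K → ℝ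
  | Sum.inl ⟨⟨k, i⟩, t⟩ => ![ 0, 0, -(u k i * l k i) ] t
  | Sum.inr ⟨i, t⟩ => ![ x i, -(x i) ] t

noncomputable def cvec (c : Fin (n K) → ℝ) : Esp n K :=
  ∑ i : Fin (n K), c i •
    EuclideanSpace.single (⟨⟨K, Nat.lt_succ_self K⟩, i⟩ : Idx n K) (1 : ℝ)

def Feas (x : Fin (n 0) → ℝ) (ζ : Esp n K) : Prop :=
  ∀ j, ⟪rowv n W l u K j, ζ⟫_ℝ ≤ rhsv n l u K x j

lemma inner_single (p : Idx n K) (ζ : Esp n K) :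
    ⟪EuclideanSpace.single p (1 : ℝ), ζ⟫_ℝ = ζ p := by
  simp [EuclideanSpace.inner_single_left]

lemma inner_comb (k : Fin K) (i : Fin (n ((k : ℕ) + 1))) (ζ : Esp n K) :
    ⟪∑ j, W k i j • EuclideanSpace.single
        (⟨⟨(k : ℕ), Nat.lt_succ_of_lt k.isLt⟩, j⟩ : Idx n K) (1 : ℝ), ζ⟫_ℝ
      = ∑ j, W k i j * ζ ⟨⟨(k : ℕ), Nat.lt_succ_of_lt k.isLt⟩, j⟩ := by
  rw [sum_inner]
  simp [real_inner_smul_left, EuclideanSpace.inner_single_left]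

lemma inner_cvec (c : Fin (n K) → ℝ) (ζ : Esp n K) :
    ⟪cvec n K c, ζ⟫_ℝ = ∑ i, c i * ζ ⟨⟨K, Nat.lt_succ_self K⟩, i⟩ := by
  rw [cvec, sum_inner]
  simp [real_inner_smul_left, EuclideanSpace.inner_single_left]

lemma feas_iff (x : Fin (n 0) → ℝ) (ζ : Esp n K) :
    Feas n W l u K x ζ ↔
      ((∀ k : Fin K, ∀ i : Fin (n ((k : ℕ) + 1)),
        0 ≤ ζ ⟨⟨(k : ℕ) + 1, Nat.succ_lt_succ k.isLt⟩, i⟩ ∧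
        (∑ j, W k i j * ζ ⟨⟨(k : ℕ), Nat.lt_succ_of_lt k.isLt⟩, j⟩)
          ≤ ζ ⟨⟨(k : ℕ) + 1, Nat.succ_lt_succ k.isLt⟩, i⟩ ∧
        (u k i - l k i) * ζ ⟨⟨(k : ℕ) + 1, Nat.succ_lt_succ k.isLt⟩, i⟩
          - u k i * (∑ j, W k i j * ζ ⟨⟨(k : ℕ), Nat.lt_succ_of_lt k.isLt⟩, j⟩)
          ≤ -(u k i * l k i)) ∧
      (∀ i, ζ ⟨⟨0, Nat.succ_pos K⟩, i⟩ = x i)) := by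
  constructor
  · intro hf
    refine ⟨fun k i => ⟨?_, ?_, ?_⟩, fun i => ?_⟩
    · have h : ⟪-(EuclideanSpace.single
          (⟨⟨(k : ℕ) + 1, Nat.succ_lt_succ k.isLt⟩, i⟩ : Idx n K) (1 : ℝ)), ζ⟫_ℝ ≤ (0 : ℝ) :=
        hf (Sum.inl ⟨⟨k, i⟩, ⟨0, Nat.succ_pos 2⟩⟩)
      rw [inner_neg_left, inner_single] at h
      linarith
    · have h : ⟪(∑ j, W k i j • EuclideanSpace.single
            (⟨⟨(k : ℕ), Nat.lt_succ_of_lt k.isLt⟩, j⟩ : Idx n K) (1 : ℝ))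
          - EuclideanSpace.single
            (⟨⟨(k : ℕ) + 1, Nat.succ_lt_succ k.isLt⟩, i⟩ : Idx n K) (1 : ℝ), ζ⟫_ℝ ≤ (0 : ℝ) :=
        hf (Sum.inl ⟨⟨k, i⟩, ⟨1, Nat.succ_lt_succ (Nat.succ_pos 1)⟩⟩)
      rw [inner_sub_left, inner_comb, inner_single] at h
      linarith
    · have h : ⟪(u k i - l k i) • EuclideanSpace.single
            (⟨⟨(k : ℕ) + 1, Nat.succ_lt_succ k.isLt⟩, i⟩ : Idx n K) (1 : ℝ)
          - u k i • ∑ j, W k i j • EuclideanSpace.single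
            (⟨⟨(k : ℕ), Nat.lt_succ_of_lt k.isLt⟩, j⟩ : Idx n K) (1 : ℝ),
          ζ⟫_ℝ ≤ -(u k i * l k i) :=
        hf (Sum.inl ⟨⟨k, i⟩, ⟨2, Nat.lt_succ_self 2⟩⟩)
      rw [inner_sub_left, real_inner_smul_left, real_inner_smul_left,
        inner_comb, inner_single] at h
      linarith
    · have h0 : ⟪EuclideanSpace.single (⟨⟨0, Nat.succ_pos K⟩, i⟩ : Idx n K) (1 : ℝ), ζ⟫_ℝ
          ≤ x i := hf (Sum.inr ⟨i, ⟨0, Nat.succ_pos 1⟩⟩)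
      have h1 : ⟪-(EuclideanSpace.single (⟨⟨0, Nat.succ_pos K⟩, i⟩ : Idx n K) (1 : ℝ)), ζ⟫_ℝ
          ≤ -(x i) := hf (Sum.inr ⟨i, ⟨1, Nat.lt_succ_self 1⟩⟩)
      rw [inner_single] at h0
      rw [inner_neg_left, inner_single] at h1
      linarith
  · rintro ⟨hc, he⟩ j
    rcases j with ⟨⟨k, i⟩, t⟩ | ⟨i, t⟩
    · rcases t with ⟨tv, htv⟩
      interval_cases tv
      · show ⟪-(EuclideanSpace.single
            (⟨⟨(k : ℕ) + 1, Nat.succ_lt_succ k.isLt⟩, i⟩ : Idx n K) (1 : ℝ)), ζ⟫_ℝ ≤ (0 : ℝ)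
        rw [inner_neg_left, inner_single]
        linarith [(hc k i).1]
      · show ⟪(∑ j, W k i j • EuclideanSpace.single
              (⟨⟨(k : ℕ), Nat.lt_succ_of_lt k.isLt⟩, j⟩ : Idx n K) (1 : ℝ))
            - EuclideanSpace.single
              (⟨⟨(k : ℕ) + 1, Nat.succ_lt_succ k.isLt⟩, i⟩ : Idx n K) (1 : ℝ), ζ⟫_ℝ ≤ (0 : ℝ)
        rw [inner_sub_left, inner_comb, inner_single]
        linarith [(hc k i).2.1]
      · show ⟪(u k i - l k i) • EuclideanSpace.single
              (⟨⟨(k : ℕ) + 1, Nat.succ_lt_succ k.isLt⟩, i⟩ : Idx n K) (1 : ℝ)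
            - u k i • ∑ j, W k i j • EuclideanSpace.single
              (⟨⟨(k : ℕ), Nat.lt_succ_of_lt k.isLt⟩, j⟩ : Idx n K) (1 : ℝ),
            ζ⟫_ℝ ≤ -(u k i * l k i)
        rw [inner_sub_left, real_inner_smul_left, real_inner_smul_left,
          inner_comb, inner_single]
        linarith [(hc k i).2.2]
    · rcases t with ⟨tv, htv⟩
      interval_cases tv
      · show ⟪EuclideanSpace.single (⟨⟨0, Nat.succ_pos K⟩, i⟩ : Idx n K) (1 : ℝ), ζ⟫_ℝ ≤ x i
        rw [inner_single]
        exact (he i).le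
      · show ⟪-(EuclideanSpace.single (⟨⟨0, Nat.succ_pos K⟩, i⟩ : Idx n K) (1 : ℝ)), ζ⟫_ℝ
            ≤ -(x i)
        rw [inner_neg_left, inner_single]
        exact neg_le_neg (he i).ge

noncomputable def toXs (ζ : Esp n K) : ∀ k : ℕ, Fin (n k) → ℝ :=
  fun k => if h : k < K + 1 then (fun i => ζ ⟨⟨k, h⟩, i⟩) else 0

noncomputable def ofXs (xs : ∀ k : ℕ, Fin (n k) → ℝ) : Esp n K :=
  (WithLp.equiv 2 (∀ _p : Idx n K, ℝ)).symm (fun p => xs p.1 p.2)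

lemma feas_to_relax (hsign : ∀ k < K, ∀ i, l k i ≤ 0 ∧ 0 ≤ u k i ∧ l k i < u k i)
    (x : Fin (n 0) → ℝ) (ζ : Esp n K) (hf : Feas n W l u K x ζ) :
    InNetRelax n W l u K x (fun i => ζ ⟨⟨K, Nat.lt_succ_self K⟩, i⟩) := by
  obtain ⟨hc, he⟩ := (feas_iff n W l u K x ζ).1 hf
  refine ⟨toXs n K ζ, ?_, ?_, ?_⟩
  · funext i
    show toXs n K ζ 0 i = x i
    simp only [toXs]
    rw [dif_pos (Nat.succ_pos K)]
    exact he i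
  · funext i
    show toXs n K ζ K i = ζ ⟨⟨K, Nat.lt_succ_self K⟩, i⟩
    simp only [toXs]
    rw [dif_pos (Nat.lt_succ_self K)]
  · intro k hk i
    have hck := hc ⟨k, hk⟩ i
    have e1 : toXs n K ζ (k + 1) i = ζ ⟨⟨k + 1, Nat.succ_lt_succ hk⟩, i⟩ := by
      simp only [toXs]
      rw [dif_pos (Nat.succ_lt_succ hk)]
    have e2 : (W k).mulVec (toXs n K ζ k) i
        = ∑ j, W k i j * ζ ⟨⟨k, Nat.lt_succ_of_lt hk⟩, j⟩ := by
      simp only [Matrix.mulVec, dotProduct, toXs]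
      rw [dif_pos (Nat.lt_succ_of_lt hk)]
    refine ⟨?_, ?_, ?_⟩
    · rw [e1]; exact hck.1
    · rw [e1, e2]; exact hck.2.1
    · rw [e1, e2]
      have hpos : 0 < u k i - l k i := sub_pos.2 (hsign k hk i).2.2
      rw [le_div_iff₀ hpos]
      have h3 := hck.2.2
      ring_nf at h3 ⊢
      linarith

lemma relax_to_feas (hsign : ∀ k < K, ∀ i, l k i ≤ 0 ∧ 0 ≤ u k i ∧ l k i < u k i)
    (x : Fin (n 0) → ℝ) (z : Fin (n K) → ℝ) (h : InNetRelax n W l u K x z) :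
    ∃ ζ : Esp n K, Feas n W l u K x ζ ∧ ∀ i, ζ ⟨⟨K, Nat.lt_succ_self K⟩, i⟩ = z i := by
  obtain ⟨xs, h0, hK, hcons⟩ := h
  refine ⟨ofXs n K xs, ?_, ?_⟩
  · rw [feas_iff]
    refine ⟨fun k i => ?_, fun i => ?_⟩
    · have hck := hcons (k : ℕ) k.isLt i
      have e1 : (ofXs n K xs) ⟨⟨(k : ℕ) + 1, Nat.succ_lt_succ k.isLt⟩, i⟩
          = xs ((k : ℕ) + 1) i := rfl
      have e2 : ∀ j : Fin (n (k : ℕ)),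
          (ofXs n K xs) ⟨⟨(k : ℕ), Nat.lt_succ_of_lt k.isLt⟩, j⟩ = xs (k : ℕ) j :=
        fun j => rfl
      have e3 : (W (k : ℕ)).mulVec (xs (k : ℕ)) i
          = ∑ j, W (k : ℕ) i j * xs (k : ℕ) j := by
        simp [Matrix.mulVec, dotProduct]
      refine ⟨?_, ?_, ?_⟩
      · rw [e1]; exact hck.1
      · rw [e1]; simp only [e2]; rw [← e3]; exact hck.2.1
      · rw [e1]; simp only [e2]; rw [← e3]
        have hpos : 0 < u (k : ℕ) i - l (k : ℕ) i :=
          sub_pos.2 (hsign (k : ℕ) k.isLt i).2.2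
        have h3 := hck.2.2
        rw [le_div_iff₀ hpos] at h3
        ring_nf at h3 ⊢
        linarith
    · show xs 0 i = x i
      rw [h0]
  · intro i
    show xs K i = z i
    rw [hK]

lemma true_relax (hsign : ∀ k < K, ∀ i, l k i ≤ 0 ∧ 0 ≤ u k i ∧ l k i < u k i)
    (x : Fin (n 0) → ℝ)
    (hval : ∀ k < K, ∀ i, l k i ≤ (W k).mulVec (netFwd n W k x) i ∧
      (W k).mulVec (netFwd n W k x) i ≤ u k i) :
    InNetRelax n W l u K x (netFwd n W K x) := by
  refine ⟨fun k => netFwd n W k x, rfl, rfl, ?_⟩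
  intro k hk i
  dsimp only
  have hb := hval k hk i
  have hs := hsign k hk i
  have e : netFwd n W (k + 1) x i = max ((W k).mulVec (netFwd n W k x) i) 0 := rfl
  refine ⟨?_, ?_, ?_⟩
  · rw [e]; exact le_max_right _ _
  · rw [e]; exact le_max_left _ _
  · rw [e]
    have hpos : 0 < u k i - l k i := sub_pos.2 hs.2.2
    rw [le_div_iff₀ hpos]
    rcases le_or_gt 0 ((W k).mulVec (netFwd n W k x) i) with hy | hy
    · rw [max_eq_left hy]
      nlinarith [mul_nonneg (sub_nonneg.2 hb.2) (neg_nonneg.2 hs.1)]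
    · rw [max_eq_right hy.le]
      have h1 : 0 ≤ (W k).mulVec (netFwd n W k x) i - l k i := sub_nonneg.2 hb.1
      nlinarith [mul_nonneg hs.2.1 h1]

lemma relax_bound (hsign : ∀ k < K, ∀ i, l k i ≤ 0 ∧ 0 ≤ u k i ∧ l k i < u k i)
    (x : Fin (n 0) → ℝ) :
    ∀ k, k ≤ K → ∃ R : ℝ, 0 ≤ R ∧ ∀ xs : (∀ m : ℕ, Fin (n m) → ℝ),
      xs 0 = x →
      (∀ m < K, ∀ i, 0 ≤ xs (m + 1) i ∧ (W m).mulVec (xs m) i ≤ xs (m + 1) i ∧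
        xs (m + 1) i ≤ u m i * ((W m).mulVec (xs m) i - l m i) / (u m i - l m i)) →
      ∀ i, |xs k i| ≤ R := by
  intro k
  induction k with
  | zero =>
    intro _
    refine ⟨∑ i, |x i|, Finset.sum_nonneg fun i _ => abs_nonneg _, ?_⟩
    intro xs h0 _ i
    rw [h0]
    exact Finset.single_le_sum (f := fun i => |x i|) (fun i _ => abs_nonneg _)
      (Finset.mem_univ i)
  | succ k ih =>
    intro hk1
    have hkK : k < K := Nat.lt_of_succ_le hk1
    obtain ⟨R, hR0, hR⟩ := ih (le_of_lt hkK)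
    set Mw : ℝ := ∑ p, ∑ q, |W k p q| with hMw
    have hMw0 : 0 ≤ Mw :=
      Finset.sum_nonneg fun p _ => Finset.sum_nonneg fun q _ => abs_nonneg _
    set R' : ℝ := ∑ i', (u k i' / (u k i' - l k i')) * (Mw * R + |l k i'|) with hR'
    have key : ∀ i', 0 ≤ (u k i' / (u k i' - l k i')) * (Mw * R + |l k i'|) := by
      intro i'
      have hs := hsign k hkK i'
      have hpos : 0 < u k i' - l k i' := sub_pos.2 hs.2.2
      exact mul_nonneg (div_nonneg hs.2.1 hpos.le)
        (add_nonneg (mul_nonneg hMw0 hR0) (abs_nonneg _))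
    refine ⟨R', Finset.sum_nonneg fun i' _ => key i', ?_⟩
    intro xs h0 hcons i
    have hc := hcons k hkK i
    have hy : |(W k).mulVec (xs k) i| ≤ Mw * R := by
      have e : (W k).mulVec (xs k) i = ∑ j, W k i j * xs k j := by
        simp [Matrix.mulVec, dotProduct]
      rw [e]
      calc |∑ j, W k i j * xs k j| ≤ ∑ j, |W k i j * xs k j| :=
            Finset.abs_sum_le_sum_abs _ _
        _ ≤ ∑ j, |W k i j| * R := by
            apply Finset.sum_le_sum
            intro j _
            rw [abs_mul]
            exact mul_le_mul_of_nonneg_left (hR xs h0 hcons j) (abs_nonneg _)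
        _ = (∑ j, |W k i j|) * R := by rw [Finset.sum_mul]
        _ ≤ Mw * R := by
            apply mul_le_mul_of_nonneg_right _ hR0
            exact Finset.single_le_sum (f := fun p => ∑ q, |W k p q|)
              (fun p _ => Finset.sum_nonneg fun q _ => abs_nonneg _) (Finset.mem_univ i)
    have hs := hsign k hkK i
    have hpos : 0 < u k i - l k i := sub_pos.2 hs.2.2
    have hup : xs (k + 1) i ≤ (u k i / (u k i - l k i)) * (Mw * R + |l k i|) := by
      calc xs (k + 1) i
          ≤ u k i * ((W k).mulVec (xs k) i - l k i) / (u k i - l k i) := hc.2.2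
        _ = (u k i / (u k i - l k i)) * ((W k).mulVec (xs k) i - l k i) := by ring
        _ ≤ (u k i / (u k i - l k i)) * (Mw * R + |l k i|) := by
            apply mul_le_mul_of_nonneg_left _ (div_nonneg hs.2.1 hpos.le)
            have h1 : (W k).mulVec (xs k) i ≤ Mw * R := (abs_le.1 hy).2
            have h2 : -(l k i) ≤ |l k i| := neg_le_abs _
            linarith
    rw [abs_of_nonneg hc.1]
    calc xs (k + 1) i ≤ (u k i / (u k i - l k i)) * (Mw * R + |l k i|) := hup
      _ ≤ R' := Finset.single_le_sum
          (f := fun i' => (u k i' / (u k i' - l k i')) * (Mw * R + |l k i'|))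
          (fun i' _ => key i') (Finset.mem_univ i)

lemma coord_le {ι : Type*} [Fintype ι] (y : EuclideanSpace ℝ ι) (i : ι) : |y i| ≤ ‖y‖ := by
  rw [EuclideanSpace.norm_eq]
  rw [show |y i| = Real.sqrt (|y i| ^ 2) from (Real.sqrt_sq (abs_nonneg _)).symm]
  apply Real.sqrt_le_sqrt
  rw [sq_abs]
  have h : y i ^ 2 = ‖y i‖ ^ 2 := by rw [Real.norm_eq_abs, sq_abs]
  rw [h]
  exact Finset.single_le_sum (f := fun j => ‖y j‖ ^ 2) (fun j _ => sq_nonneg _)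
    (Finset.mem_univ i)

lemma gap_bound (x₁ x₂ : EuclideanSpace ℝ (Fin (n 0))) (ζ : Esp n K)
    (hf : Feas n W l u K x₁ ζ) :
    ∑ j, max (⟪rowv n W l u K j, ζ⟫_ℝ - rhsv n l u K x₂ j) 0
      ≤ (2 * n 0 : ℝ) * ‖x₁ - x₂‖ := by
  obtain ⟨hc, he⟩ := (feas_iff n W l u K x₁ ζ).1 hf
  rw [Fintype.sum_sum_type]
  have hinl : ∀ p : (Σ k : Fin K, Fin (n (k + 1))) × Fin 3,
      max (⟪rowv n W l u K (Sum.inl p), ζ⟫_ℝ - rhsv n l u K x₂ (Sum.inl p)) 0 = 0 := by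
    intro p
    apply max_eq_right
    rw [sub_nonpos]
    have h2 : rhsv n l u K x₁ (Sum.inl p) = rhsv n l u K x₂ (Sum.inl p) := by
      rcases p with ⟨⟨k, i⟩, t⟩; rfl
    rw [← h2]
    exact hf (Sum.inl p)
  have hinr : ∀ q : Fin (n 0) × Fin 2,
      max (⟪rowv n W l u K (Sum.inr q), ζ⟫_ℝ - rhsv n l u K x₂ (Sum.inr q)) 0
        ≤ |x₁ q.1 - x₂ q.1| := by
    rintro ⟨i, t⟩
    rcases t with ⟨tv, htv⟩
    interval_cases tv
    · show max (⟪EuclideanSpace.single (⟨⟨0, Nat.succ_pos K⟩, i⟩ : Idx n K) (1 : ℝ), ζ⟫_ℝ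
          - x₂ i) 0 ≤ _
      rw [inner_single, he i]
      exact max_le (le_abs_self _) (abs_nonneg _)
    · show max (⟪-(EuclideanSpace.single (⟨⟨0, Nat.succ_pos K⟩, i⟩ : Idx n K) (1 : ℝ)), ζ⟫_ℝ
          - (-(x₂ i))) 0 ≤ _
      rw [inner_neg_left, inner_single, he i]
      rw [show -(x₁ i) - -(x₂ i) = -(x₁ i - x₂ i) by ring]
      exact max_le (neg_le_abs _) (abs_nonneg _)
  have hsum1 : ∑ p : (Σ k : Fin K, Fin (n (k + 1))) × Fin 3,
      max (⟪rowv n W l u K (Sum.inl p), ζ⟫_ℝ - rhsv n l u K x₂ (Sum.inl p)) 0 = 0 :=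
    Finset.sum_eq_zero fun p _ => hinl p
  have hsum2 : ∑ q : Fin (n 0) × Fin 2,
      max (⟪rowv n W l u K (Sum.inr q), ζ⟫_ℝ - rhsv n l u K x₂ (Sum.inr q)) 0
        ≤ ∑ q : Fin (n 0) × Fin 2, |x₁ q.1 - x₂ q.1| :=
    Finset.sum_le_sum fun q _ => hinr q
  have hsum3 : ∑ q : Fin (n 0) × Fin 2, |x₁ q.1 - x₂ q.1|
      = 2 * ∑ i, |x₁ i - x₂ i| := by
    rw [Fintype.sum_prod_type, Finset.mul_sum]
    refine Finset.sum_congr rfl fun i _ => ?_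
    show ∑ _y : Fin 2, |x₁ i - x₂ i| = 2 * |x₁ i - x₂ i|
    rw [Finset.sum_const, Finset.card_univ, Fintype.card_fin, nsmul_eq_mul]
    norm_num
  have hsum4 : ∑ i, |x₁ i - x₂ i| ≤ (n 0 : ℝ) * ‖x₁ - x₂‖ := by
    calc ∑ i, |x₁ i - x₂ i| ≤ ∑ _i : Fin (n 0), ‖x₁ - x₂‖ := by
          apply Finset.sum_le_sum
          intro i _
          rw [show x₁ i - x₂ i = (x₁ - x₂) i from rfl]
          exact coord_le _ i
      _ = (n 0 : ℝ) * ‖x₁ - x₂‖ := by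
          rw [Finset.sum_const, Finset.card_univ, Fintype.card_fin, nsmul_eq_mul]
  rw [hsum1]
  have h5 := hsum2.trans (le_of_eq hsum3)
  have h4 : 2 * ∑ i, |x₁ i - x₂ i| ≤ 2 * ((n 0 : ℝ) * ‖x₁ - x₂‖) := by linarith
  calc (0 : ℝ) + ∑ q : Fin (n 0) × Fin 2,
        max (⟪rowv n W l u K (Sum.inr q), ζ⟫_ℝ - rhsv n l u K x₂ (Sum.inr q)) 0
      ≤ 0 + 2 * ((n 0 : ℝ) * ‖x₁ - x₂‖) := by linarith
    _ = (2 * n 0 : ℝ) * ‖x₁ - x₂‖ := by ring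

end LPAux

/-- Lipschitz LP relaxations: for a `K`-layer ReLU network with
relaxed network constraint set `N` built from valid preactivation bounds on a
compact polytope `X`, there is a finite `L` such that
`|sup{cᵀz : (x₁,z) ∈ N} − sup{cᵀz : (x₂,z) ∈ N}| ≤ L‖x₁ − x₂‖₂` for all
`x₁, x₂ ∈ X`. -/
theorem lp_relaxation_is_lipschitz
    (n : ℕ → ℕ) (K : ℕ) (W : ∀ k : ℕ, Matrix (Fin (n (k + 1))) (Fin (n k)) ℝ)
    (l u : ∀ k : ℕ, Fin (n (k + 1)) → ℝ)
    (hsign : ∀ k < K, ∀ i, l k i ≤ 0 ∧ 0 ≤ u k i ∧ l k i < u k i)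
    (X : Set (EuclideanSpace ℝ (Fin (n 0))))
    -- `X` is a (compact) polytope: the convex hull of finitely many points
    (hX : ∃ V : Finset (EuclideanSpace ℝ (Fin (n 0))), X = convexHull ℝ (V : Set _))
    (hvalid : ValidBounds n W l u K X)
    (c : Fin (n K) → ℝ) :
    ∃ L : ℝ, ∀ x₁ ∈ X, ∀ x₂ ∈ X,
      |sSup {v | ∃ z, InNetRelax n W l u K x₁ z ∧ v = ∑ i, c i * z i} -
        sSup {v | ∃ z, InNetRelax n W l u K x₂ z ∧ v = ∑ i, c i * z i}| ≤
      L * ‖x₁ - x₂‖ := by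
  classical
  obtain ⟨C, hC0, hoffC⟩ := hoffman (LPAux.rowv n W l u K)
  set cv := LPAux.cvec n K c with hcv
  refine ⟨‖cv‖ * (C * (2 * n 0)), ?_⟩
  have key : ∀ y₁ ∈ X, ∀ y₂ ∈ X,
      sSup {v | ∃ z, InNetRelax n W l u K y₁ z ∧ v = ∑ i, c i * z i}
        ≤ sSup {v | ∃ z, InNetRelax n W l u K y₂ z ∧ v = ∑ i, c i * z i}
          + ‖cv‖ * (C * (2 * n 0)) * ‖y₁ - y₂‖ := by
    intro y₁ hy₁ y₂ hy₂
    have hne₁ : {v | ∃ z, InNetRelax n W l u K y₁ z ∧ v = ∑ i, c i * z i}.Nonempty :=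
      ⟨_, ⟨_, LPAux.true_relax n W l u K hsign y₁ (hvalid y₁ hy₁), rfl⟩⟩
    obtain ⟨R, hR0, hRb⟩ := LPAux.relax_bound n W l u K hsign y₂ K (le_refl K)
    have hbdd₂ : BddAbove {v | ∃ z, InNetRelax n W l u K y₂ z ∧ v = ∑ i, c i * z i} := by
      refine ⟨∑ i, |c i| * R, ?_⟩
      rintro v ⟨z, ⟨xs, h0, hKz, hcons⟩, rfl⟩
      apply Finset.sum_le_sum
      intro i _
      have hz : |z i| ≤ R := by rw [← hKz]; exact hRb xs h0 hcons i
      calc c i * z i ≤ |c i * z i| := le_abs_self _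
        _ = |c i| * |z i| := abs_mul _ _
        _ ≤ |c i| * R := mul_le_mul_of_nonneg_left hz (abs_nonneg _)
    apply csSup_le hne₁
    rintro v ⟨z, hz, rfl⟩
    obtain ⟨ζ, hζf, hζz⟩ := LPAux.relax_to_feas n W l u K hsign y₁ z hz
    have hfe₂ : ∃ w, ∀ j, ⟪LPAux.rowv n W l u K j, w⟫_ℝ ≤ LPAux.rhsv n l u K y₂ j := by
      obtain ⟨ζ₂, h₂, _⟩ := LPAux.relax_to_feas n W l u K hsign y₂ _
        (LPAux.true_relax n W l u K hsign y₂ (hvalid y₂ hy₂))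
      exact ⟨ζ₂, h₂⟩
    obtain ⟨p, hpf, hpd⟩ := hoffC (LPAux.rhsv n l u K y₂) ζ hfe₂
    have hgap := LPAux.gap_bound n W l u K y₁ y₂ ζ hζf
    have hdist : ‖ζ - p‖ ≤ C * ((2 * n 0 : ℝ) * ‖y₁ - y₂‖) :=
      hpd.trans (mul_le_mul_of_nonneg_left hgap hC0)
    have hpmem : (∑ i, c i * p ⟨⟨K, Nat.lt_succ_self K⟩, i⟩)
        ∈ {v | ∃ z, InNetRelax n W l u K y₂ z ∧ v = ∑ i, c i * z i} :=
      ⟨_, LPAux.feas_to_relax n W l u K hsign y₂ p hpf, rfl⟩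
    have hv1 : ∑ i, c i * z i = ⟪cv, ζ⟫_ℝ := by
      rw [hcv, LPAux.inner_cvec]
      exact Finset.sum_congr rfl fun i _ => by rw [hζz i]
    have hv2 : ⟪cv, p⟫_ℝ = ∑ i, c i * p ⟨⟨K, Nat.lt_succ_self K⟩, i⟩ := by
      rw [hcv, LPAux.inner_cvec]
    have hip : ⟪cv, ζ⟫_ℝ - ⟪cv, p⟫_ℝ ≤ ‖cv‖ * ‖ζ - p‖ := by
      rw [← inner_sub_right]
      exact real_inner_le_norm _ _
    have h6 : ‖cv‖ * ‖ζ - p‖ ≤ ‖cv‖ * (C * ((2 * n 0 : ℝ) * ‖y₁ - y₂‖)) :=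
      mul_le_mul_of_nonneg_left hdist (norm_nonneg _)
    have h7 : ⟪cv, ζ⟫_ℝ ≤ (∑ i, c i * p ⟨⟨K, Nat.lt_succ_self K⟩, i⟩)
        + ‖cv‖ * (C * ((2 * n 0 : ℝ) * ‖y₁ - y₂‖)) := by
      rw [← hv2]; linarith
    have hfin : ∑ i, c i * z i
        ≤ (∑ i, c i * p ⟨⟨K, Nat.lt_succ_self K⟩, i⟩)
          + ‖cv‖ * (C * (2 * n 0)) * ‖y₁ - y₂‖ := by
      rw [hv1]
      calc ⟪cv, ζ⟫_ℝ ≤ _ := h7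
        _ = (∑ i, c i * p ⟨⟨K, Nat.lt_succ_self K⟩, i⟩)
            + ‖cv‖ * (C * (2 * n 0)) * ‖y₁ - y₂‖ := by ring
    exact hfin.trans (add_le_add_left (le_csSup hbdd₂ hpmem) _)
  intro x₁ hx₁ x₂ hx₂
  have h12 := key x₁ hx₁ x₂ hx₂
  have h21 := key x₂ hx₂ x₁ hx₁
  rw [norm_sub_rev x₂ x₁] at h21
  rw [abs_sub_le_iff]
  constructor <;> linarith
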